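/- arXiv:2405.15408 — 2 statements merged into one kernel-verified Lean document; each statement's English description precedes it below -/
import Mathlib

section
/- Let J₂ be the operator J₂(B)ⁱ := (1/2) ∑_{j,k} ε^{ijk} (Sʲ Bᵏ − Bᵏ Sʲ) on triples of antisymmetric real 4×4 matrices. Then for every symmetric real 4×4 matrix h, the triple Bⁱ := (1/2)(h Sⁱ + Sⁱ h) (the coordinate form of h_{[μ}{}^α Σⁱ_{|α|ν]}) satisfies J₂(B)ⁱ = (1/2) tr(h) Sⁱ for i = 1,2,3. In particular, if tr(h) = 0 then B lies in the kernel of J₂. -/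
open Matrix BigOperators

/-- Levi-Civita symbol on three indices, `ε 0 1 2 = 1`. -/
noncomputable def eps3 (i j k : Fin 3) : ℝ :=
  Matrix.det (Matrix.of fun a b => if ![i, j, k] a = b then (1 : ℝ) else 0)

/-- The canonical matrices `S¹, S², S³`. -/
def Scan : Fin 3 → Matrix (Fin 4) (Fin 4) ℝ :=
  ![!![0, 0, 0, -1; 0, 0, -1, 0; 0, 1, 0, 0; 1, 0, 0, 0],
    !![0, 0, 1, 0; 0, 0, 0, -1; -1, 0, 0, 0; 0, 1, 0, 0],
    !![0, -1, 0, 0; 1, 0, 0, 0; 0, 0, 0, -1; 0, 0, 1, 0]]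

/-- The operator `J₂(B)ⁱ = (1/2) ∑_{jk} ε^{ijk} (Sʲ Bᵏ − Bᵏ Sʲ)`. -/
noncomputable def J2 (B : Fin 3 → Matrix (Fin 4) (Fin 4) ℝ) :
    Fin 3 → Matrix (Fin 4) (Fin 4) ℝ :=
  fun i => (1 / 2 : ℝ) • ∑ j, ∑ k, eps3 i j k • (Scan j * B k - B k * Scan j)

lemma eps3_val (i j k : Fin 3) : eps3 i j k =
    ![![![0,0,0],![0,0,1],![0,-1,0]],
      ![![0,0,-1],![0,0,0],![1,0,0]],
      ![![0,1,0],![-1,0,0],![0,0,0]]] i j k := by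
  fin_cases i <;> fin_cases j <;> fin_cases k <;>
    simp [eps3, Matrix.det_fin_three]

lemma fin4mk0 (h0 : (0:ℕ) < 4) : (⟨0, h0⟩ : Fin 4) = 0 := rfl
lemma fin4mk1 (h1 : (1:ℕ) < 4) : (⟨1, h1⟩ : Fin 4) = 1 := rfl
lemma fin4mk2 (h2 : (2:ℕ) < 4) : (⟨2, h2⟩ : Fin 4) = 2 := rfl
lemma fin4mk3 (h3 : (3:ℕ) < 4) : (⟨3, h3⟩ : Fin 4) = 3 := rfl

set_option maxHeartbeats 2000000 in
lemma key0 (h : Matrix (Fin 4) (Fin 4) ℝ) (hsymm : hᵀ = h) :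
      J2 (fun l => (1 / 2 : ℝ) • (h * Scan l + Scan l * h)) 0
        = ((1 / 2 : ℝ) * h.trace) • Scan 0 := by
  have hs : ∀ a b, h b a = h a b := fun a b => by
    have := congrFun (congrFun hsymm b) a
    simpa using this.symm
  simp only [J2, Fin.sum_univ_three, eps3_val, Matrix.cons_val_zero, Matrix.cons_val_one,
    Matrix.cons_val_two, Matrix.head_cons, Matrix.tail_cons, Matrix.head_fin_const,
    one_smul, neg_smul, zero_smul, add_zero, zero_add, neg_sub]
  ext a b
  simp only [Matrix.smul_apply, Matrix.sub_apply, Matrix.add_apply, Matrix.neg_apply,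
    Matrix.mul_apply, Fin.sum_univ_four, smul_eq_mul, Matrix.trace, Matrix.diag]
  fin_cases a <;> fin_cases b <;>
    simp [Scan, hs 0 1, hs 0 2, hs 0 3, hs 1 2, hs 1 3, hs 2 3] <;> ring

set_option maxHeartbeats 2000000 in
lemma key1 (h : Matrix (Fin 4) (Fin 4) ℝ) (hsymm : hᵀ = h) :
      J2 (fun l => (1 / 2 : ℝ) • (h * Scan l + Scan l * h)) 1
        = ((1 / 2 : ℝ) * h.trace) • Scan 1 := by
  have hs : ∀ a b, h b a = h a b := fun a b => by
    have := congrFun (congrFun hsymm b) a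
    simpa using this.symm
  simp only [J2, Fin.sum_univ_three, eps3_val, Matrix.cons_val_zero, Matrix.cons_val_one,
    Matrix.cons_val_two, Matrix.head_cons, Matrix.tail_cons, Matrix.head_fin_const,
    one_smul, neg_smul, zero_smul, add_zero, zero_add, neg_sub]
  ext a b
  simp only [Matrix.smul_apply, Matrix.sub_apply, Matrix.add_apply, Matrix.neg_apply,
    Matrix.mul_apply, Fin.sum_univ_four, smul_eq_mul, Matrix.trace, Matrix.diag]
  fin_cases a <;> fin_cases b <;>
    simp [Scan, hs 0 1, hs 0 2, hs 0 3, hs 1 2, hs 1 3, hs 2 3] <;> ring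

set_option maxHeartbeats 2000000 in
lemma key2 (h : Matrix (Fin 4) (Fin 4) ℝ) (hsymm : hᵀ = h) :
      J2 (fun l => (1 / 2 : ℝ) • (h * Scan l + Scan l * h)) 2
        = ((1 / 2 : ℝ) * h.trace) • Scan 2 := by
  have hs : ∀ a b, h b a = h a b := fun a b => by
    have := congrFun (congrFun hsymm b) a
    simpa using this.symm
  simp only [J2, Fin.sum_univ_three, eps3_val, Matrix.cons_val_zero, Matrix.cons_val_one,
    Matrix.cons_val_two, Matrix.head_cons, Matrix.tail_cons, Matrix.head_fin_const,
    one_smul, neg_smul, zero_smul, add_zero, zero_add, neg_sub]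
  ext a b
  simp only [Matrix.smul_apply, Matrix.sub_apply, Matrix.add_apply, Matrix.neg_apply,
    Matrix.mul_apply, Fin.sum_univ_four, smul_eq_mul, Matrix.trace, Matrix.diag]
  fin_cases a <;> fin_cases b <;>
    simp [Scan, hs 0 1, hs 0 2, hs 0 3, hs 1 2, hs 1 3, hs 2 3] <;> ring

lemma key (h : Matrix (Fin 4) (Fin 4) ℝ) (hsymm : hᵀ = h) (i : Fin 3) :
      J2 (fun l => (1 / 2 : ℝ) • (h * Scan l + Scan l * h)) i
        = ((1 / 2 : ℝ) * h.trace) • Scan i := by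
  fin_cases i
  · exact key0 h hsymm
  · exact key1 h hsymm
  · exact key2 h hsymm

/-- for symmetric `h` and `Bⁱ = (1/2)(h Sⁱ + Sⁱ h)` one has
`J₂(B)ⁱ = (1/2) tr(h) Sⁱ`; in particular `tr(h) = 0` implies `J₂(B) = 0`. -/
theorem J2_on_symmetric_orbit (h : Matrix (Fin 4) (Fin 4) ℝ) (hsymm : hᵀ = h) :
    (∀ i : Fin 3,
      J2 (fun l => (1 / 2 : ℝ) • (h * Scan l + Scan l * h)) i
        = ((1 / 2 : ℝ) * h.trace) • Scan i) ∧
    (h.trace = 0 →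
      J2 (fun l => (1 / 2 : ℝ) • (h * Scan l + Scan l * h)) = 0) := by
  refine ⟨key h hsymm, fun ht => ?_⟩
  funext i
  rw [key h hsymm i, ht, mul_zero, zero_smul]
  rfl
end

section
/- Let B¹, B², B³ be antisymmetric real 4×4 matrices such that: (i) ∑_{μ,ν} Sⁱ_{μν} Bʲ_{μν} + ∑_{μ,ν} Sʲ_{μν} Bⁱ_{μν} = 0 for all i, j ∈ {1,2,3}; and (ii) ∑_{i=1}^{3} (Sⁱ Bⁱ + Bⁱ Sⁱ) = 0 (the zero 4×4 matrix). Then there exists c ∈ ℝ³ such that Bⁱ = ∑_{j,k} ε^{ijk} c_j Sᵏ for i = 1,2,3. (This is the algebraic core of the theorem that the covariant derivative of an SU(2)-structure satisfies ∇_μ Σⁱ = −ε^{ijk} Aʲ_μ Σᵏ for an SO(3) connection A, since conditions (i) and (ii) are exactly the vanishing of the S⁴₊, ℝ, and S²₊⊗S²₋ components of ∇_μ Σ that follow from ∇(Σⁱ·Σʲ) = 0 and ∇g = 0.) -/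
open Matrix BigOperators

lemma eps3_000 : eps3 0 0 0 = 0 := by simp [eps3, Matrix.det_fin_three, Matrix.cons_val]
lemma eps3_001 : eps3 0 0 1 = 0 := by simp [eps3, Matrix.det_fin_three, Matrix.cons_val]
lemma eps3_002 : eps3 0 0 2 = 0 := by simp [eps3, Matrix.det_fin_three, Matrix.cons_val]
lemma eps3_010 : eps3 0 1 0 = 0 := by simp [eps3, Matrix.det_fin_three, Matrix.cons_val]
lemma eps3_011 : eps3 0 1 1 = 0 := by simp [eps3, Matrix.det_fin_three, Matrix.cons_val]
lemma eps3_012 : eps3 0 1 2 = 1 := by simp [eps3, Matrix.det_fin_three, Matrix.cons_val]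
lemma eps3_020 : eps3 0 2 0 = 0 := by simp [eps3, Matrix.det_fin_three, Matrix.cons_val]
lemma eps3_021 : eps3 0 2 1 = -1 := by simp [eps3, Matrix.det_fin_three, Matrix.cons_val]
lemma eps3_022 : eps3 0 2 2 = 0 := by simp [eps3, Matrix.det_fin_three, Matrix.cons_val]
lemma eps3_100 : eps3 1 0 0 = 0 := by simp [eps3, Matrix.det_fin_three, Matrix.cons_val]
lemma eps3_101 : eps3 1 0 1 = 0 := by simp [eps3, Matrix.det_fin_three, Matrix.cons_val]
lemma eps3_102 : eps3 1 0 2 = -1 := by simp [eps3, Matrix.det_fin_three, Matrix.cons_val]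
lemma eps3_110 : eps3 1 1 0 = 0 := by simp [eps3, Matrix.det_fin_three, Matrix.cons_val]
lemma eps3_111 : eps3 1 1 1 = 0 := by simp [eps3, Matrix.det_fin_three, Matrix.cons_val]
lemma eps3_112 : eps3 1 1 2 = 0 := by simp [eps3, Matrix.det_fin_three, Matrix.cons_val]
lemma eps3_120 : eps3 1 2 0 = 1 := by simp [eps3, Matrix.det_fin_three, Matrix.cons_val]
lemma eps3_121 : eps3 1 2 1 = 0 := by simp [eps3, Matrix.det_fin_three, Matrix.cons_val]
lemma eps3_122 : eps3 1 2 2 = 0 := by simp [eps3, Matrix.det_fin_three, Matrix.cons_val]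
lemma eps3_200 : eps3 2 0 0 = 0 := by simp [eps3, Matrix.det_fin_three, Matrix.cons_val]
lemma eps3_201 : eps3 2 0 1 = 1 := by simp [eps3, Matrix.det_fin_three, Matrix.cons_val]
lemma eps3_202 : eps3 2 0 2 = 0 := by simp [eps3, Matrix.det_fin_three, Matrix.cons_val]
lemma eps3_210 : eps3 2 1 0 = -1 := by simp [eps3, Matrix.det_fin_three, Matrix.cons_val]
lemma eps3_211 : eps3 2 1 1 = 0 := by simp [eps3, Matrix.det_fin_three, Matrix.cons_val]
lemma eps3_212 : eps3 2 1 2 = 0 := by simp [eps3, Matrix.det_fin_three, Matrix.cons_val]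
lemma eps3_220 : eps3 2 2 0 = 0 := by simp [eps3, Matrix.det_fin_three, Matrix.cons_val]
lemma eps3_221 : eps3 2 2 1 = 0 := by simp [eps3, Matrix.det_fin_three, Matrix.cons_val]
lemma eps3_222 : eps3 2 2 2 = 0 := by simp [eps3, Matrix.det_fin_three, Matrix.cons_val]

lemma rhs0 (c : Fin 3 → ℝ) :
    (∑ j, ∑ k, (eps3 0 j k * c j) • Scan k) = c 1 • Scan 2 + (-(c 2)) • Scan 1 := by
  simp [Fin.sum_univ_three, eps3_000, eps3_001, eps3_002, eps3_010, eps3_011, eps3_012,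
    eps3_020, eps3_021, eps3_022, neg_smul]

lemma rhs1 (c : Fin 3 → ℝ) :
    (∑ j, ∑ k, (eps3 1 j k * c j) • Scan k) = c 2 • Scan 0 + (-(c 0)) • Scan 2 := by
  simp [Fin.sum_univ_three, eps3_100, eps3_101, eps3_102, eps3_110, eps3_111, eps3_112,
    eps3_120, eps3_121, eps3_122, neg_smul]
  all_goals module

lemma rhs2 (c : Fin 3 → ℝ) :
    (∑ j, ∑ k, (eps3 2 j k * c j) • Scan k) = c 0 • Scan 1 + (-(c 1)) • Scan 0 := by
  simp [Fin.sum_univ_three, eps3_200, eps3_201, eps3_202, eps3_210, eps3_211, eps3_212,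
    eps3_220, eps3_221, eps3_222, neg_smul]

set_option maxHeartbeats 1000000 in
/-- the algebraic core of the intrinsic-torsion theorem: an
antisymmetric triple `B` whose `S⁴₊ ⊕ ℝ` components (condition (i)) and
`S²₊ ⊗ S²₋` component (condition (ii)) vanish is of the form
`Bⁱ = ε^{ijk} c_j Sᵏ`. -/
theorem torsion_algebraic_core
    (B : Fin 3 → Matrix (Fin 4) (Fin 4) ℝ)
    (hanti : ∀ i, (B i)ᵀ = -B i)
    (h1 : ∀ i j : Fin 3,
      (∑ μ, ∑ ν, Scan i μ ν * B j μ ν) + (∑ μ, ∑ ν, Scan j μ ν * B i μ ν) = 0)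
    (h2 : (∑ i, (Scan i * B i + B i * Scan i)) = 0) :
    ∃ c : Fin 3 → ℝ, ∀ i, B i = ∑ j, ∑ k, (eps3 i j k * c j) • Scan k := by
  have hA : ∀ i μ ν, B i ν μ = - B i μ ν := fun i μ ν => by
    simpa using congrFun (congrFun (hanti i) μ) ν
  have ad00 : B 0 0 0 = 0 := by linarith [hA 0 0 0]
  have a001 : B 0 1 0 = - B 0 0 1 := hA 0 0 1
  have a002 : B 0 2 0 = - B 0 0 2 := hA 0 0 2
  have a003 : B 0 3 0 = - B 0 0 3 := hA 0 0 3
  have ad01 : B 0 1 1 = 0 := by linarith [hA 0 1 1]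
  have a012 : B 0 2 1 = - B 0 1 2 := hA 0 1 2
  have a013 : B 0 3 1 = - B 0 1 3 := hA 0 1 3
  have ad02 : B 0 2 2 = 0 := by linarith [hA 0 2 2]
  have a023 : B 0 3 2 = - B 0 2 3 := hA 0 2 3
  have ad03 : B 0 3 3 = 0 := by linarith [hA 0 3 3]
  have ad10 : B 1 0 0 = 0 := by linarith [hA 1 0 0]
  have a101 : B 1 1 0 = - B 1 0 1 := hA 1 0 1
  have a102 : B 1 2 0 = - B 1 0 2 := hA 1 0 2
  have a103 : B 1 3 0 = - B 1 0 3 := hA 1 0 3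
  have ad11 : B 1 1 1 = 0 := by linarith [hA 1 1 1]
  have a112 : B 1 2 1 = - B 1 1 2 := hA 1 1 2
  have a113 : B 1 3 1 = - B 1 1 3 := hA 1 1 3
  have ad12 : B 1 2 2 = 0 := by linarith [hA 1 2 2]
  have a123 : B 1 3 2 = - B 1 2 3 := hA 1 2 3
  have ad13 : B 1 3 3 = 0 := by linarith [hA 1 3 3]
  have ad20 : B 2 0 0 = 0 := by linarith [hA 2 0 0]
  have a201 : B 2 1 0 = - B 2 0 1 := hA 2 0 1
  have a202 : B 2 2 0 = - B 2 0 2 := hA 2 0 2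
  have a203 : B 2 3 0 = - B 2 0 3 := hA 2 0 3
  have ad21 : B 2 1 1 = 0 := by linarith [hA 2 1 1]
  have a212 : B 2 2 1 = - B 2 1 2 := hA 2 1 2
  have a213 : B 2 3 1 = - B 2 1 3 := hA 2 1 3
  have ad22 : B 2 2 2 = 0 := by linarith [hA 2 2 2]
  have a223 : B 2 3 2 = - B 2 2 3 := hA 2 2 3
  have ad23 : B 2 3 3 = 0 := by linarith [hA 2 3 3]
  have e00 := h1 0 0
  have e01 := h1 0 1
  have e02 := h1 0 2
  have e11 := h1 1 1
  have e12 := h1 1 2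
  have e22 := h1 2 2
  have f00 := congrFun (congrFun h2 0) 0
  have f01 := congrFun (congrFun h2 0) 1
  have f02 := congrFun (congrFun h2 0) 2
  have f03 := congrFun (congrFun h2 0) 3
  have f11 := congrFun (congrFun h2 1) 1
  have f12 := congrFun (congrFun h2 1) 2
  have f13 := congrFun (congrFun h2 1) 3
  have f22 := congrFun (congrFun h2 2) 2
  have f23 := congrFun (congrFun h2 2) 3
  have f33 := congrFun (congrFun h2 3) 3
  simp [Scan, Fin.sum_univ_four, Fin.sum_univ_three, Matrix.mul_apply, Matrix.sum_apply,
    Matrix.vecHead, Matrix.vecTail]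
    at e00 e01 e02 e11 e12 e22 f00 f01 f02 f03 f11 f12 f13 f22 f23 f33
  set c : Fin 3 → ℝ := ![B 2 3 1, B 0 1 0, B 1 3 0] with hc
  have hc0 : c 0 = B 2 3 1 := rfl
  have hc1 : c 1 = B 0 1 0 := rfl
  have hc2 : c 2 = B 1 3 0 := rfl
  have g0 : B 0 = ∑ j, ∑ k, (eps3 0 j k * c j) • Scan k := by
    rw [rhs0, hc1, hc2]
    ext μ ν
    fin_cases μ <;> fin_cases ν <;>
      · simp [Scan, Matrix.vecHead, Matrix.vecTail] <;> linarith
  have g1 : B 1 = ∑ j, ∑ k, (eps3 1 j k * c j) • Scan k := by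
    rw [rhs1, hc0, hc2]
    ext μ ν
    fin_cases μ <;> fin_cases ν <;>
      · simp [Scan, Matrix.vecHead, Matrix.vecTail] <;> linarith
  have g2 : B 2 = ∑ j, ∑ k, (eps3 2 j k * c j) • Scan k := by
    rw [rhs2, hc0, hc1]
    ext μ ν
    fin_cases μ <;> fin_cases ν <;>
      · simp [Scan, Matrix.vecHead, Matrix.vecTail] <;> linarith
  exact ⟨c, fun i => by fin_cases i; exacts [g0, g1, g2]⟩
end
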